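/- Define on the null-shell the weight ζ := 2 − M^{1/4}·sgn(p_{r*})·sgn(r−3M)·|p_{r*}/p_t|^{1/4}·|1/r − 1/(3M)|^{1/4}, where p_t = −E. Then 1 ≤ ζ ≤ 3 at every point of the null-shell. Moreover, there exists a constant c > 0, depending only on M, such that along any radially reduced future-directed null geodesic, at every parameter s₀ with p_{r*}(s₀) ≠ 0 and r(s₀) ≠ 3M, the function s ↦ ζ(s) is differentiable at s₀ and its derivative satisfies ζ'(s₀) ≤ −c·( |p_{r*}|/r² + |1 − 3M/r|·ℓ²/(r³E) ) evaluated at s₀. -/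

import Mathlib

open Real

/-- The weight `ζ = 2 − M^{1/4}·sgn(p_{r*})·sgn(r−3M)·|p_{r*}/p_t|^{1/4}·|1/r − 1/(3M)|^{1/4}`
on the null-shell, with `p_t = −E`. -/
noncomputable def zetaWeight (M E rv pv : ℝ) : ℝ :=
  2 - M ^ ((1 : ℝ) / 4) * Real.sign pv * Real.sign (rv - 3 * M)
      * |pv / (-E)| ^ ((1 : ℝ) / 4) * |1 / rv - 1 / (3 * M)| ^ ((1 : ℝ) / 4)

lemma rpow34 {x a b : ℝ} (hx : 0 ≤ x) (ha : 0 ≤ a) (hb : 0 ≤ b)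
    (h : x^3 * b^4 ≤ a^4) : x^((3:ℝ)/4) * b ≤ a := by
  have hx34 : 0 ≤ x^((3:ℝ)/4) := Real.rpow_nonneg hx _
  have e : (x^((3:ℝ)/4))^(4:ℕ) = x^3 := by
    rw [← Real.rpow_natCast (x^((3:ℝ)/4)) 4, ← Real.rpow_mul hx]
    norm_num
  have h4 : (x^((3:ℝ)/4)*b)^4 ≤ a^4 := by
    calc (x^((3:ℝ)/4)*b)^4 = (x^((3:ℝ)/4))^(4:ℕ) * b^4 := by ring
      _ = x^3 * b^4 := by rw [e]
      _ ≤ a^4 := h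
  exact le_of_pow_le_pow_left₀ (by norm_num) ha h4

lemma abs_sign_le_one (x : ℝ) : |Real.sign x| ≤ 1 := by
  rcases lt_trichotomy x 0 with h|h|h
  · rw [Real.sign_of_neg h]; norm_num
  · rw [h, Real.sign_zero]; norm_num
  · rw [Real.sign_of_pos h]; norm_num

lemma zeta_alt {M E rv pv : ℝ} (hM : 0 < M) (hrv : 0 < rv) (hE : 0 < E) :
    zetaWeight M E rv pv
      = 2 - Real.sign pv * Real.sign (rv - 3*M) *
          (M * ((|pv|/E) * |(3*M)⁻¹ - rv⁻¹|)) ^ ((1:ℝ)/4) := by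
  unfold zetaWeight
  have h1 : |pv / (-E)| = |pv|/E := by
    rw [abs_div, abs_neg, abs_of_pos hE]
  have h2 : |1/rv - 1/(3*M)| = |(3*M)⁻¹ - rv⁻¹| := by
    rw [abs_sub_comm]; norm_num [one_div]
  rw [h1, h2, Real.mul_rpow hM.le (by positivity),
    Real.mul_rpow (by positivity) (abs_nonneg _)]
  ring

lemma sigX {M E rv pv : ℝ} (hM : 0 < M) (hrv : 0 < rv) (hE : 0 < E)
    (hpv : pv ≠ 0) (hr3 : rv ≠ 3*M) :
    (Real.sign pv * Real.sign (rv - 3*M)) * ((M/E) * (pv * ((3*M)⁻¹ - rv⁻¹)))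
      = M * ((|pv|/E) * |(3*M)⁻¹ - rv⁻¹|) := by
  have hkey : (3*M)⁻¹ - rv⁻¹ = (rv - 3*M)/(3*M*rv) := by
    field_simp
  rcases lt_or_gt_of_ne hpv with h1|h1 <;> rcases lt_or_gt_of_ne hr3 with h2|h2
  · have hx : (3*M)⁻¹ - rv⁻¹ < 0 := by
      rw [hkey]; apply div_neg_of_neg_of_pos (by linarith) (by positivity)
    rw [Real.sign_of_neg h1, Real.sign_of_neg (by linarith : rv - 3*M < 0),
      abs_of_neg h1, abs_of_neg hx]
    ring
  · have hx : 0 < (3*M)⁻¹ - rv⁻¹ := by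
      rw [hkey]; exact div_pos (by linarith) (by positivity)
    rw [Real.sign_of_neg h1, Real.sign_of_pos (by linarith : 0 < rv - 3*M),
      abs_of_neg h1, abs_of_pos hx]
    ring
  · have hx : (3*M)⁻¹ - rv⁻¹ < 0 := by
      rw [hkey]; apply div_neg_of_neg_of_pos (by linarith) (by positivity)
    rw [Real.sign_of_pos h1, Real.sign_of_neg (by linarith : rv - 3*M < 0),
      abs_of_pos h1, abs_of_neg hx]
    ring
  · have hx : 0 < (3*M)⁻¹ - rv⁻¹ := by
      rw [hkey]; exact div_pos (by linarith) (by positivity)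
    rw [Real.sign_of_pos h1, Real.sign_of_pos (by linarith : 0 < rv - 3*M),
      abs_of_pos h1, abs_of_pos hx]
    ring

lemma zeta_bounds {M rv pv E ℓ : ℝ} (hM : 0 < M) (hrv : 2*M < rv) (hE : 0 < E)
    (hl : 0 ≤ ℓ) (hshell : E^2 = pv^2 + (1-2*M/rv)*ℓ^2/rv^2) :
    1 ≤ zetaWeight M E rv pv ∧ zetaWeight M E rv pv ≤ 3 := by
  have hrv0 : 0 < rv := by linarith
  have hfrac : 0 < 1 - 2*M/rv := by
    rw [sub_pos, div_lt_one hrv0]; exact hrv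
  have hterm : (0:ℝ) ≤ (1-2*M/rv)*ℓ^2/rv^2 := by positivity
  have hpv2 : pv^2 ≤ E^2 := by linarith
  have hpE : |pv| ≤ E := by
    nlinarith [sq_abs pv, abs_nonneg pv]
  have h1 : |pv/(-E)| = |pv|/E := by rw [abs_div, abs_neg, abs_of_pos hE]
  have hpvE : |pv/(-E)| ≤ 1 := by
    rw [h1, div_le_one hE]; exact hpE
  have hu : |1/rv - 1/(3*M)| ≤ 1/(3*M) := by
    rw [abs_le]
    constructor
    · have : (0:ℝ) < 1/rv := by positivity
      linarith
    · have hlt : 1/rv < 1/(2*M) := by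
        apply one_div_lt_one_div_of_lt (by positivity) hrv
      have h2 : (1:ℝ)/(2*M) ≤ 2/(3*M) := by
        rw [div_le_div_iff₀ (by positivity) (by positivity)]; linarith
      have h3 : (2:ℝ)/(3*M) - 1/(3*M) = 1/(3*M) := by ring
      linarith
  have hprod : M * (|pv/(-E)| * |1/rv - 1/(3*M)|) ≤ 1 := by
    have h4 : |pv/(-E)| * |1/rv - 1/(3*M)| ≤ 1 * (1/(3*M)) :=
      mul_le_mul hpvE hu (abs_nonneg _) (by norm_num)
    have h5 : M * (|pv/(-E)| * |1/rv - 1/(3*M)|) ≤ M * (1/(3*M)) :=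
      mul_le_mul_of_nonneg_left (by linarith) hM.le
    have h6 : M * (1/(3*M)) = 1/3 := by field_simp
    linarith
  have habs : |M ^ ((1:ℝ)/4) * Real.sign pv * Real.sign (rv - 3*M)
      * |pv/(-E)| ^ ((1:ℝ)/4) * |1/rv - 1/(3*M)| ^ ((1:ℝ)/4)| ≤ 1 := by
    have e1 : |M ^ ((1:ℝ)/4) * Real.sign pv * Real.sign (rv - 3*M)
        * |pv/(-E)| ^ ((1:ℝ)/4) * |1/rv - 1/(3*M)| ^ ((1:ℝ)/4)|
        = M ^ ((1:ℝ)/4) * |Real.sign pv| * |Real.sign (rv - 3*M)|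
        * |pv/(-E)| ^ ((1:ℝ)/4) * |1/rv - 1/(3*M)| ^ ((1:ℝ)/4) := by
      rw [abs_mul, abs_mul, abs_mul, abs_mul,
        abs_of_nonneg (Real.rpow_nonneg hM.le _),
        abs_of_nonneg (Real.rpow_nonneg (abs_nonneg _) _),
        abs_of_nonneg (Real.rpow_nonneg (abs_nonneg _) _)]
    rw [e1]
    have e2 : M ^ ((1:ℝ)/4) * |pv/(-E)| ^ ((1:ℝ)/4) * |1/rv - 1/(3*M)| ^ ((1:ℝ)/4)
        = (M * (|pv/(-E)| * |1/rv - 1/(3*M)|)) ^ ((1:ℝ)/4) := by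
      rw [Real.mul_rpow hM.le (by positivity),
        Real.mul_rpow (abs_nonneg _) (abs_nonneg _)]
      ring
    have e3 : (M * (|pv/(-E)| * |1/rv - 1/(3*M)|)) ^ ((1:ℝ)/4) ≤ 1 :=
      Real.rpow_le_one (by positivity) hprod (by norm_num)
    calc M ^ ((1:ℝ)/4) * |Real.sign pv| * |Real.sign (rv - 3*M)|
        * |pv/(-E)| ^ ((1:ℝ)/4) * |1/rv - 1/(3*M)| ^ ((1:ℝ)/4)
        ≤ M ^ ((1:ℝ)/4) * 1 * 1
          * |pv/(-E)| ^ ((1:ℝ)/4) * |1/rv - 1/(3*M)| ^ ((1:ℝ)/4) := by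
          apply mul_le_mul_of_nonneg_right _ (Real.rpow_nonneg (abs_nonneg _) _)
          apply mul_le_mul_of_nonneg_right _ (Real.rpow_nonneg (abs_nonneg _) _)
          apply mul_le_mul (mul_le_mul_of_nonneg_left (abs_sign_le_one _)
            (Real.rpow_nonneg hM.le _)) (abs_sign_le_one _) (abs_nonneg _)
            (by positivity)
      _ = M ^ ((1:ℝ)/4) * |pv/(-E)| ^ ((1:ℝ)/4) * |1/rv - 1/(3*M)| ^ ((1:ℝ)/4) := by
          ring
      _ ≤ 1 := by rw [e2]; exact e3
  have hb := abs_le.mp habs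
  unfold zetaWeight
  constructor <;> linarith [hb.1, hb.2]


set_option maxHeartbeats 1000000 in
lemma key1 {M R p w E ℓ : ℝ} (hM : 0<M) (hR : 2*M<R) (hp : 0<p) (hw : 0<w)
    (hwR : w ≤ R) (hE : 0<E) (hl : 0≤ℓ) (hpE : p ≤ E)
    (hshell : E^2*R^3 = p^2*R^3 + (R-2*M)*ℓ^2) :
    (p*w/(3*R*E))^3 * (E*(p/R^2))^4
      ≤ (p^2/R^2 + w^2*ℓ^2/(3*M*R^5))^4 := by
  have hR0 : 0 < R := by linarith
  have hlhs : (p*w/(3*R*E))^3 * (E*(p/R^2))^4 = p^7*w^3*E/(27*R^11) := by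
    field_simp; ring
  rw [hlhs]
  rcases le_or_gt E (2*p) with hcase|hcase
  · -- first term dominates
    have h1 : (p^2/R^2)^4 ≤ (p^2/R^2 + w^2*ℓ^2/(3*M*R^5))^4 := by
      apply pow_le_pow_left₀ (by positivity)
      have : (0:ℝ) ≤ w^2*ℓ^2/(3*M*R^5) := by positivity
      linarith
    refine le_trans ?_ h1
    rw [div_pow, div_le_div_iff₀ (by positivity) (by positivity)]
    have hw3 : w^3 ≤ R^3 := pow_le_pow_left₀ hw.le hwR 3
    calc p^7*w^3*E*(R^2)^4 ≤ p^7*R^3*(2*p)*(R^2)^4 := by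
          have h0 : p^7*w^3*E ≤ p^7*R^3*(2*p) := by
            calc p^7*w^3*E ≤ p^7*R^3*E := by
                  apply mul_le_mul_of_nonneg_right _ hE.le
                  exact mul_le_mul_of_nonneg_left hw3 (by positivity)
              _ ≤ p^7*R^3*(2*p) := by
                  exact mul_le_mul_of_nonneg_left hcase (by positivity)
          exact mul_le_mul_of_nonneg_right h0 (by positivity)
      _ = 2*(p^2)^4*R^11 := by ring
      _ ≤ (p^2)^4*(27*R^11) := by nlinarith [pow_pos hp 2, pow_pos hR0 11, mul_pos (pow_pos (pow_pos hp 2) 4) (pow_pos hR0 11)]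
  · rcases le_or_gt (w*E) (p*R) with hc2|hc2
    · -- still first term
      have h1 : (p^2/R^2)^4 ≤ (p^2/R^2 + w^2*ℓ^2/(3*M*R^5))^4 := by
        apply pow_le_pow_left₀ (by positivity)
        have : (0:ℝ) ≤ w^2*ℓ^2/(3*M*R^5) := by positivity
        linarith
      refine le_trans ?_ h1
      rw [div_pow, div_le_div_iff₀ (by positivity) (by positivity)]
      have hE2 : (0:ℝ) < E^2 := by positivity
      rw [← mul_le_mul_iff_of_pos_right hE2]
      have h3 : (w*E)^3 ≤ (p*R)^3 := pow_le_pow_left₀ (by positivity) hc2 3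
      have h4 : (2*p)^2 ≤ E^2 := pow_le_pow_left₀ (by positivity) hcase.le 2
      nlinarith [mul_le_mul_of_nonneg_left h3 (show (0:ℝ) ≤ p^7*(R^2)^4 by positivity),
        mul_le_mul_of_nonneg_left h4 (show (0:ℝ) ≤ (p^2)^4*(27*R^11) by positivity),
        mul_pos (pow_pos hp 10) (pow_pos hR0 11)]
    · -- second term dominates
      have h1 : (w^2*ℓ^2/(3*M*R^5))^4 ≤ (p^2/R^2 + w^2*ℓ^2/(3*M*R^5))^4 := by
        apply pow_le_pow_left₀ (by positivity)
        have : (0:ℝ) ≤ p^2/R^2 := by positivity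
        linarith
      refine le_trans ?_ h1
      -- reduce to key : 3*M^4*R^9*p^7*E ≤ w^5*ℓ^8
      have hl0 : 0 < ℓ := by
        rcases hl.lt_or_eq with h|h
        · exact h
        · exfalso
          have : E^2*R^3 = p^2*R^3 + (R-2*M)*ℓ^2 := hshell
          rw [← h] at this
          -- ℓ = 0 : E² = p², so E = p, but p*R < w*E ≤ R*E = R*p, contra
          have hEp : E = p := by
            have : E^2 = p^2 := by
              have hR3 : (0:ℝ) < R^3 := by positivity
              nlinarith
            nlinarith
          have : w*E ≤ R*E := mul_le_mul_of_nonneg_right hwR hE.le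
          rw [hEp] at this hc2
          linarith [hc2, this]
      have hl2 : 3*E^2*R^2 ≤ 4*ℓ^2 := by
        -- (R−2M)ℓ² = (E²−p²)R³ ≥ (3/4)E²R³ ; ℓ²R ≥ (R−2M)ℓ²
        have h4p : 4*p^2 ≤ E^2 := by
          have := pow_le_pow_left₀ (by positivity : (0:ℝ) ≤ 2*p) hcase.le 2
          linarith [this]
        have hA : 3*E^2*R^3 ≤ 4*(R-2*M)*ℓ^2 := by
          have := mul_le_mul_of_nonneg_right h4p (by positivity : (0:ℝ) ≤ R^3)
          linarith [this, hshell]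
        have hB : (R-2*M)*ℓ^2 ≤ R*ℓ^2 :=
          mul_le_mul_of_nonneg_right (by linarith : R-2*M ≤ R) (sq_nonneg ℓ)
        have hC : 3*E^2*R^3 ≤ 4*R*ℓ^2 := by linarith [hA, hB]
        have hD : (3*E^2*R^2)*R ≤ (4*ℓ^2)*R := by
          calc (3*E^2*R^2)*R = 3*E^2*R^3 := by ring
            _ ≤ 4*R*ℓ^2 := hC
            _ = (4*ℓ^2)*R := by ring
        exact le_of_mul_le_mul_right hD hR0
      have hl8 : 81*(E^8*R^8) ≤ 256*ℓ^8 := by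
        have := pow_le_pow_left₀ (by positivity : (0:ℝ) ≤ 3*E^2*R^2) hl2 4
        linarith [this]
      have h3 : p^7*R^7 ≤ w^7*E^7 := by
        have := pow_le_pow_left₀ (by positivity : (0:ℝ) ≤ p*R) hc2.le 7
        calc p^7*R^7 = (p*R)^7 := by ring
          _ ≤ (w*E)^7 := this
          _ = w^7*E^7 := by ring
      have hR4 : 16*M^4 ≤ R^4 := by
        have := pow_le_pow_left₀ (by positivity : (0:ℝ) ≤ 2*M) hR.le 4
        linarith [this]
      have key : 3*M^4*R^9*p^7*E ≤ w^5*ℓ^8 := by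
        have s1 : 3*M^4*R^9*p^7*E ≤ 3*M^4*R^2*E*(w^7*E^7) := by
          calc 3*M^4*R^9*p^7*E = (3*M^4*R^2*E)*(p^7*R^7) := by ring
            _ ≤ (3*M^4*R^2*E)*(w^7*E^7) := by
                exact mul_le_mul_of_nonneg_left h3 (by positivity)
        have s2 : 3*M^4*R^2*w^2 ≤ (3/16)*R^8 := by
          have hw2 : w^2 ≤ R^2 := pow_le_pow_left₀ hw.le hwR 2
          have t1 : 16*M^4*w^2 ≤ R^4*R^2 :=
            mul_le_mul hR4 hw2 (by positivity) (by positivity)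
          have t2 : (16*M^4*w^2)*R^2 ≤ (R^4*R^2)*R^2 :=
            mul_le_mul_of_nonneg_right t1 (by positivity)
          linarith [t2]
        have s3 : 3*M^4*R^2*E*(w^7*E^7) = w^5*E^8*(3*M^4*R^2*w^2) := by ring
        have s4 : w^5*E^8*(3*M^4*R^2*w^2) ≤ w^5*E^8*((3/16)*R^8) := by
          exact mul_le_mul_of_nonneg_left s2 (by positivity)
        have s5 : w^5*E^8*((3/16)*R^8) ≤ w^5*((3/16)*(256/81)*ℓ^8) := by
          have : E^8*R^8 ≤ (256/81)*ℓ^8 := by linarith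
          calc w^5*E^8*((3/16)*R^8) = w^5*(3/16)*(E^8*R^8) := by ring
            _ ≤ w^5*(3/16)*((256/81)*ℓ^8) := by
                exact mul_le_mul_of_nonneg_left this (by positivity)
            _ = w^5*((3/16)*(256/81)*ℓ^8) := by ring
        have s6 : w^5*((3/16)*(256/81)*ℓ^8) ≤ w^5*ℓ^8 := by
          have : (3/16)*(256/81)*ℓ^8 ≤ ℓ^8 := by linarith [pow_nonneg hl 8]
          exact mul_le_mul_of_nonneg_left this (by positivity)
        linarith [s1, s4, s5, s6, s3.le, s3.ge]
      rw [div_pow, div_le_div_iff₀ (by positivity) (by positivity)]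
      calc p^7*w^3*E*(3*M*R^5)^4 = (27*R^11*w^3)*(3*M^4*R^9*p^7*E) := by ring
        _ ≤ (27*R^11*w^3)*(w^5*ℓ^8) := by
            exact mul_le_mul_of_nonneg_left key (by positivity)
        _ = (w^2*ℓ^2)^4*(27*R^11) := by ring


set_option maxHeartbeats 1000000 in
lemma key2 {M R p w E ℓ : ℝ} (hM : 0<M) (hR : 2*M<R) (hp : 0<p) (hw : 0<w)
    (hwR : w ≤ R) (hE : 0<E) (hl : 0≤ℓ) (hpE : p ≤ E) (habs : w = |R - 3*M|)
    (hshell : E^2*R^3 = p^2*R^3 + (R-2*M)*ℓ^2) :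
    (p*w/(3*R*E))^3 * ((E/(8*M))*(w*ℓ^2/(R^4*E)))^4
      ≤ (p^2/R^2 + w^2*ℓ^2/(3*M*R^5))^4 := by
  have hR0 : 0 < R := by linarith
  have hlhs : (p*w/(3*R*E))^3 * ((E/(8*M))*(w*ℓ^2/(R^4*E)))^4
      = p^3*w^7*ℓ^8/(110592*M^4*R^19*E^3) := by
    field_simp; ring
  rw [hlhs]
  by_cases hcase : p*R ≤ w*E ∨ R ≤ 16*w
  · -- second term dominates
    have key' : 81*(p^3*R) ≤ 110592*(w*E^3) := by
      rcases hcase with hA|hB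
      · have h1 : p^3*R^3 ≤ w^3*E^3 := by
          have := pow_le_pow_left₀ (by positivity : (0:ℝ) ≤ p*R) hA 3
          calc p^3*R^3 = (p*R)^3 := by ring
            _ ≤ (w*E)^3 := this
            _ = w^3*E^3 := by ring
        have hw2 : w^2 ≤ R^2 := pow_le_pow_left₀ hw.le hwR 2
        have h2 : (w*E^3)*w^2 ≤ (w*E^3)*R^2 :=
          mul_le_mul_of_nonneg_left hw2 (by positivity)
        have h3 : (81*(p^3*R))*R^2 ≤ (110592*(w*E^3))*R^2 := by
          have hnn : (0:ℝ) ≤ w*E^3*R^2 := by positivity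
          linarith [h1, h2, hnn]
        exact le_of_mul_le_mul_right h3 (by positivity)
      · have h1 : p^3 ≤ E^3 := pow_le_pow_left₀ hp.le hpE 3
        have h2 : p^3*R ≤ E^3*R := mul_le_mul_of_nonneg_right h1 hR0.le
        have h3 : E^3*R ≤ E^3*(16*w) := mul_le_mul_of_nonneg_left hB (by positivity)
        nlinarith [h2, h3, mul_nonneg (pow_nonneg hE.le 3) hw.le]
    have h1 : (w^2*ℓ^2/(3*M*R^5))^4 ≤ (p^2/R^2 + w^2*ℓ^2/(3*M*R^5))^4 := by
      apply pow_le_pow_left₀ (by positivity)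
      have : (0:ℝ) ≤ p^2/R^2 := by positivity
      linarith
    refine le_trans ?_ h1
    rw [div_pow, div_le_div_iff₀ (by positivity) (by positivity)]
    calc p^3*w^7*ℓ^8*(3*M*R^5)^4 = (M^4*R^19*w^7*ℓ^8)*(81*(p^3*R)) := by ring
      _ ≤ (M^4*R^19*w^7*ℓ^8)*(110592*(w*E^3)) := by
          apply mul_le_mul_of_nonneg_left key' (by positivity)
      _ = (w^2*ℓ^2)^4*(110592*M^4*R^19*E^3) := by ring
  · push_neg at hcase
    obtain ⟨hA', hB'⟩ := hcase
    -- R is near 3M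
    have h1 : |R - 3*M| < R/16 := by rw [← habs]; linarith
    have h2 := abs_lt.mp h1
    have hlo : 48*M < 17*R := by linarith [h2.1]
    have hup : 15*R < 48*M := by linarith [h2.2]
    have hRM : 5*R < 16*M := by linarith
    have hl2 : 14*M*ℓ^2 ≤ 17*E^2*R^3 := by
      have t1 : (R-2*M)*ℓ^2 ≤ E^2*R^3 := by
        have : (0:ℝ) ≤ p^2*R^3 := by positivity
        linarith [hshell]
      have t2 : (14*M)*ℓ^2 ≤ (17*(R-2*M))*ℓ^2 :=
        mul_le_mul_of_nonneg_right (by linarith) (sq_nonneg ℓ)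
      nlinarith [t1, t2]
    have h14 : 38416*(M^4*ℓ^8) ≤ 83521*(E^8*R^12) := by
      have := pow_le_pow_left₀ (by positivity : (0:ℝ) ≤ 14*M*ℓ^2) hl2 4
      linarith [this]
    have hc : w^7*E^7 ≤ p^7*R^7 := by
      have := pow_le_pow_left₀ (by positivity : (0:ℝ) ≤ w*E) hA'.le 7
      calc w^7*E^7 = (w*E)^7 := by ring
        _ ≤ (p*R)^7 := this
        _ = p^7*R^7 := by ring
    have h58 : 390625*R^8 ≤ 4294967296*M^8 := by
      have := pow_le_pow_left₀ (by positivity : (0:ℝ) ≤ 5*R) hRM.le 8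
      linarith [this]
    have hp2 : p^2 ≤ E^2 := pow_le_pow_left₀ hp.le hpE 2
    have key'' : w^7*ℓ^8 ≤ 110592*(M^4*R^11*E^3*p^5) := by
      have hC0 : (0:ℝ) < 38416*390625*(M^4*E^7) := by positivity
      have big : (w^7*ℓ^8)*(38416*390625*(M^4*E^7))
          ≤ (110592*(M^4*R^11*E^3*p^5))*(38416*390625*(M^4*E^7)) := by
        calc (w^7*ℓ^8)*(38416*390625*(M^4*E^7))
            = (38416*390625*M^4*ℓ^8)*(w^7*E^7) := by ring
          _ ≤ (38416*390625*M^4*ℓ^8)*(p^7*R^7) := by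
              apply mul_le_mul_of_nonneg_left hc (by positivity)
          _ = (390625*p^7*R^7)*(38416*(M^4*ℓ^8)) := by ring
          _ ≤ (390625*p^7*R^7)*(83521*(E^8*R^12)) := by
              apply mul_le_mul_of_nonneg_left h14 (by positivity)
          _ = (83521*p^7*E^8*R^11)*(390625*R^8) := by ring
          _ ≤ (83521*p^7*E^8*R^11)*(4294967296*M^8) := by
              apply mul_le_mul_of_nonneg_left h58 (by positivity)
          _ = (83521*4294967296*M^8*R^11*E^8*p^5)*(p^2) := by ring
          _ ≤ (83521*4294967296*M^8*R^11*E^8*p^5)*(E^2) := by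
              apply mul_le_mul_of_nonneg_left hp2 (by positivity)
          _ = (M^8*R^11*E^10*p^5)*(83521*4294967296) := by ring
          _ ≤ (M^8*R^11*E^10*p^5)*((110592:ℝ)*38416*390625) := by
              apply mul_le_mul_of_nonneg_left (by norm_num) (by positivity)
          _ = (110592*(M^4*R^11*E^3*p^5))*(38416*390625*(M^4*E^7)) := by ring
      exact le_of_mul_le_mul_right big hC0
    have h1 : (p^2/R^2)^4 ≤ (p^2/R^2 + w^2*ℓ^2/(3*M*R^5))^4 := by
      apply pow_le_pow_left₀ (by positivity)
      have : (0:ℝ) ≤ w^2*ℓ^2/(3*M*R^5) := by positivity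
      linarith
    refine le_trans ?_ h1
    rw [div_pow, div_le_div_iff₀ (by positivity) (by positivity)]
    calc p^3*w^7*ℓ^8*(R^2)^4 = (p^3*R^8)*(w^7*ℓ^8) := by ring
      _ ≤ (p^3*R^8)*(110592*(M^4*R^11*E^3*p^5)) := by
          apply mul_le_mul_of_nonneg_left key'' (by positivity)
      _ = (p^2)^4*(110592*M^4*R^19*E^3) := by ring


set_option maxHeartbeats 1000000 in
/-- `1 ≤ ζ ≤ 3` at every point of the null-shell, and there exists `c > 0`,
depending only on `M`, such that along any radially reduced future-directed null geodesic,
at every parameter with `p_{r*} ≠ 0` and `r ≠ 3M`, `ζ` is differentiable with derivative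
`≤ −c·(|p_{r*}|/r² + |1 − 3M/r|·ℓ²/(r³E))`. -/
theorem schwarzschild_zeta_weight (M : ℝ) (hM : 0 < M) :
    (∀ rv pv E ℓ : ℝ, 2 * M < rv → 0 < E → 0 ≤ ℓ →
        E ^ 2 = pv ^ 2 + (1 - 2 * M / rv) * ℓ ^ 2 / rv ^ 2 →
        1 ≤ zetaWeight M E rv pv ∧ zetaWeight M E rv pv ≤ 3) ∧
    ∃ c > 0, ∀ (I : Set ℝ), I.OrdConnected →
      ∀ (r prs : ℝ → ℝ) (E ℓ : ℝ), 0 < E → 0 ≤ ℓ →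
      (∀ s ∈ I, 2 * M < r s) →
      (∀ s ∈ I, HasDerivWithinAt r (prs s) I s) →
      (∀ s ∈ I, HasDerivWithinAt prs ((r s - 3 * M) / (r s) ^ 4 * ℓ ^ 2) I s) →
      (∀ s ∈ I, E ^ 2 = (prs s) ^ 2 + (1 - 2 * M / r s) * ℓ ^ 2 / (r s) ^ 2) →
      ∀ s₀ ∈ I, prs s₀ ≠ 0 → r s₀ ≠ 3 * M →
        ∃ d, HasDerivWithinAt (fun u => zetaWeight M E (r u) (prs u)) d I s₀ ∧
          d ≤ -c * (|prs s₀| / (r s₀) ^ 2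
                + |1 - 3 * M / r s₀| * ℓ ^ 2 / ((r s₀) ^ 3 * E)) := by
  constructor
  · intro rv pv E ℓ hrv hE hl hshell
    exact zeta_bounds hM hrv hE hl hshell
  · refine ⟨min (M/8) (1/64), lt_min (by positivity) (by norm_num), ?_⟩
    intro I _hI r prs E ℓ hE hl hr2M hrd hpd hshell s₀ hs₀ hp0 hr3
    have hR2M : 2*M < (r s₀) := hr2M s₀ hs₀
    have hR0 : 0 < (r s₀) := by linarith
    have hrD := hrd s₀ hs₀
    have hpD := hpd s₀ hs₀
    -- derivative scaffolding
    have hinv : HasDerivWithinAt (fun u => (r u)⁻¹) (-(prs s₀)/(r s₀)^2) I s₀ :=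
      hrD.inv (ne_of_gt hR0)
    have hsub : HasDerivWithinAt (fun u => (3*M)⁻¹ - (r u)⁻¹)
        (-(-(prs s₀)/(r s₀)^2)) I s₀ := hinv.const_sub _
    have hG : HasDerivWithinAt (fun u => prs u * ((3*M)⁻¹ - (r u)⁻¹))
        (((r s₀) - 3*M)/(r s₀)^4*ℓ^2 * ((3*M)⁻¹ - (r s₀)⁻¹) + (prs s₀) * -(-(prs s₀)/(r s₀)^2)) I s₀ := hpD.mul hsub
    have hin : HasDerivWithinAt
        (fun u => (Real.sign (prs s₀) * Real.sign ((r s₀) - 3*M)) * ((M/E) * (prs u * ((3*M)⁻¹ - (r u)⁻¹))))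
        ((Real.sign (prs s₀) * Real.sign ((r s₀) - 3*M)) * ((M/E) * (((r s₀) - 3*M)/(r s₀)^4*ℓ^2 * ((3*M)⁻¹ - (r s₀)⁻¹) + (prs s₀) * -(-(prs s₀)/(r s₀)^2)))) I s₀ :=
      (hG.const_mul (M/E)).const_mul _
    -- value of the inner function at s₀
    have hx0val : (Real.sign (prs s₀) * Real.sign ((r s₀) - 3*M)) * ((M/E) * ((prs s₀) * ((3*M)⁻¹ - (r s₀)⁻¹))) = |(prs s₀)| * |(r s₀) - 3*M| / (3*(r s₀)*E) := by
      rw [sigX hM hR0 hE hp0 hr3]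
      rw [show (3*M)⁻¹ - (r s₀)⁻¹ = ((r s₀) - 3*M)/(3*M*(r s₀)) from by field_simp]
      rw [abs_div, abs_of_pos (show (0:ℝ) < 3*M*(r s₀) by positivity)]
      field_simp
    have hpw : (0:ℝ) < |(prs s₀)| * |(r s₀) - 3*M| / (3*(r s₀)*E) := by
      apply div_pos (mul_pos (abs_pos.mpr hp0) (abs_pos.mpr (sub_ne_zero.mpr hr3)))
      positivity
    have hx0pos : 0 < (Real.sign (prs s₀) * Real.sign ((r s₀) - 3*M)) * ((M/E) * ((prs s₀) * ((3*M)⁻¹ - (r s₀)⁻¹))) := by rw [hx0val]; exact hpw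
    have hrp := hin.rpow_const (p := (1:ℝ)/4) (Or.inl (ne_of_gt hx0pos))
    have hσcases : (Real.sign (prs s₀) * Real.sign ((r s₀) - 3*M)) = 1 ∨ (Real.sign (prs s₀) * Real.sign ((r s₀) - 3*M)) = -1 := by
      rcases lt_or_gt_of_ne hp0 with h|h <;> rcases lt_or_gt_of_ne hr3 with h2|h2
      · left
        rw [Real.sign_of_neg h, Real.sign_of_neg (show (r s₀) - 3*M < 0 by linarith)]
        norm_num
      · right
        rw [Real.sign_of_neg h, Real.sign_of_pos (show 0 < (r s₀) - 3*M by linarith)]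
        norm_num
      · right
        rw [Real.sign_of_pos h, Real.sign_of_neg (show (r s₀) - 3*M < 0 by linarith)]
        norm_num
      · left
        rw [Real.sign_of_pos h, Real.sign_of_pos (show 0 < (r s₀) - 3*M by linarith)]
        norm_num
    have hy : 0 < (|(prs s₀)| * |(r s₀) - 3*M| / (3*(r s₀)*E)) ^ ((3:ℝ)/4) := Real.rpow_pos_of_pos hpw _
    have hGS : ((r s₀) - 3*M)/(r s₀)^4*ℓ^2 * ((3*M)⁻¹ - (r s₀)⁻¹) + (prs s₀) * -(-(prs s₀)/(r s₀)^2) = (prs s₀)^2/(r s₀)^2 + ((r s₀) - 3*M)^2*ℓ^2/(3*M*(r s₀)^5) := by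
      field_simp
      ring
    have hx0pow : ((Real.sign (prs s₀) * Real.sign ((r s₀) - 3*M)) * ((M/E) * ((prs s₀) * ((3*M)⁻¹ - (r s₀)⁻¹)))) ^ ((1:ℝ)/4 - 1) = ((|(prs s₀)| * |(r s₀) - 3*M| / (3*(r s₀)*E)) ^ ((3:ℝ)/4))⁻¹ := by
      rw [hx0val, show (1:ℝ)/4 - 1 = -((3:ℝ)/4) by norm_num,
        Real.rpow_neg hpw.le]
    -- the modified derivative statement
    have hZ' : HasDerivWithinAt
        (fun u => 2 - (Real.sign (prs s₀) * Real.sign ((r s₀) - 3*M)) * ((Real.sign (prs s₀) * Real.sign ((r s₀) - 3*M)) * ((M/E) * (prs u * ((3*M)⁻¹ - (r u)⁻¹)))) ^ ((1:ℝ)/4))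
        (-((M/E) * ((prs s₀)^2/(r s₀)^2 + ((r s₀) - 3*M)^2*ℓ^2/(3*M*(r s₀)^5)) / 4 * ((|(prs s₀)| * |(r s₀) - 3*M| / (3*(r s₀)*E)) ^ ((3:ℝ)/4))⁻¹)) I s₀ := by
      have h := (hrp.const_mul ((Real.sign (prs s₀) * Real.sign ((r s₀) - 3*M)))).const_sub 2
      refine h.congr_deriv ?_
      symm
      show -((M/E) * ((prs s₀)^2/(r s₀)^2 + ((r s₀) - 3*M)^2*ℓ^2/(3*M*(r s₀)^5)) / 4 * ((|(prs s₀)| * |(r s₀) - 3*M| / (3*(r s₀)*E)) ^ ((3:ℝ)/4))⁻¹)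
          = -((Real.sign (prs s₀) * Real.sign ((r s₀) - 3*M)) * ((Real.sign (prs s₀) * Real.sign ((r s₀) - 3*M)) * ((M/E) * (((r s₀) - 3*M)/(r s₀)^4*ℓ^2 * ((3*M)⁻¹ - (r s₀)⁻¹) + (prs s₀) * -(-(prs s₀)/(r s₀)^2))) * ((1:ℝ)/4) *
              ((Real.sign (prs s₀) * Real.sign ((r s₀) - 3*M)) * ((M/E) * ((prs s₀) * ((3*M)⁻¹ - (r s₀)⁻¹)))) ^ ((1:ℝ)/4 - 1)))
      rw [hGS, hx0pow]
      rcases hσcases with h1|h1 <;> rw [h1] <;> ring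
    -- eventual sign facts
    have ht_r : Filter.Tendsto r (nhdsWithin s₀ I) (nhds ((r s₀))) := hrD.continuousWithinAt
    have ht_p : Filter.Tendsto prs (nhdsWithin s₀ I) (nhds ((prs s₀))) := hpD.continuousWithinAt
    have hev_r0 : ∀ᶠ u in nhdsWithin s₀ I, 0 < r u := ht_r (Ioi_mem_nhds hR0)
    have hev_p : ∀ᶠ u in nhdsWithin s₀ I,
        Real.sign (prs u) = Real.sign (prs s₀) ∧ prs u ≠ 0 := by
      rcases lt_or_gt_of_ne hp0 with h|h
      · have hev : ∀ᶠ u in nhdsWithin s₀ I, prs u < 0 := ht_p (Iio_mem_nhds h)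
        exact hev.mono fun u hu =>
          ⟨by rw [Real.sign_of_neg hu, Real.sign_of_neg h], ne_of_lt hu⟩
      · have hev : ∀ᶠ u in nhdsWithin s₀ I, 0 < prs u := ht_p (Ioi_mem_nhds h)
        exact hev.mono fun u hu =>
          ⟨by rw [Real.sign_of_pos hu, Real.sign_of_pos h], (ne_of_lt hu).symm⟩
    have hev_r3 : ∀ᶠ u in nhdsWithin s₀ I,
        Real.sign (r u - 3*M) = Real.sign ((r s₀) - 3*M) ∧ r u ≠ 3*M := by
      rcases lt_or_gt_of_ne hr3 with h|h
      · have hev : ∀ᶠ u in nhdsWithin s₀ I, r u < 3*M := ht_r (Iio_mem_nhds h)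
        exact hev.mono fun u hu =>
          ⟨by rw [Real.sign_of_neg (show r u - 3*M < 0 by linarith),
              Real.sign_of_neg (show (r s₀) - 3*M < 0 by linarith)], ne_of_lt hu⟩
      · have hev : ∀ᶠ u in nhdsWithin s₀ I, 3*M < r u := ht_r (Ioi_mem_nhds h)
        exact hev.mono fun u hu =>
          ⟨by rw [Real.sign_of_pos (show 0 < r u - 3*M by linarith),
              Real.sign_of_pos (show 0 < (r s₀) - 3*M by linarith)], (ne_of_lt hu).symm⟩
    have hevEq : (fun u => zetaWeight M E (r u) (prs u)) =ᶠ[nhdsWithin s₀ I]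
        (fun u => 2 - (Real.sign (prs s₀) * Real.sign ((r s₀) - 3*M)) * ((Real.sign (prs s₀) * Real.sign ((r s₀) - 3*M)) * ((M/E) * (prs u * ((3*M)⁻¹ - (r u)⁻¹)))) ^ ((1:ℝ)/4)) := by
      filter_upwards [hev_p, hev_r3, hev_r0] with u hpu hru hr0u
      rw [zeta_alt hM hr0u hE, ← sigX hM hr0u hE hpu.2 hru.2, hpu.1, hru.1]
    have hpt : zetaWeight M E ((r s₀)) ((prs s₀))
        = 2 - (Real.sign (prs s₀) * Real.sign ((r s₀) - 3*M)) * ((Real.sign (prs s₀) * Real.sign ((r s₀) - 3*M)) * ((M/E) * ((prs s₀) * ((3*M)⁻¹ - (r s₀)⁻¹)))) ^ ((1:ℝ)/4) := by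
      rw [zeta_alt hM hR0 hE, ← sigX hM hR0 hE hp0 hr3]
    have hZ : HasDerivWithinAt (fun u => zetaWeight M E (r u) (prs u))
        (-((M/E) * ((prs s₀)^2/(r s₀)^2 + ((r s₀) - 3*M)^2*ℓ^2/(3*M*(r s₀)^5)) / 4 * ((|(prs s₀)| * |(r s₀) - 3*M| / (3*(r s₀)*E)) ^ ((3:ℝ)/4))⁻¹)) I s₀ :=
      hZ'.congr_of_eventuallyEq hevEq hpt
    refine ⟨_, hZ, ?_⟩
    -- now the numeric estimate
    have hsh := hshell s₀ hs₀
    have hfrac : 0 < 1 - 2*M/(r s₀) := by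
      rw [sub_pos, div_lt_one hR0]; exact hR2M
    have hterm : (0:ℝ) ≤ (1-2*M/(r s₀))*ℓ^2/(r s₀)^2 := by positivity
    have hpE : |(prs s₀)| ≤ E := by
      nlinarith [sq_abs (prs s₀), abs_nonneg (prs s₀)]
    have hsh' : E^2*(r s₀)^3 = |(prs s₀)|^2*(r s₀)^3 + ((r s₀)-2*M)*ℓ^2 := by
      rw [sq_abs]
      have h1 : (1-2*M/(r s₀))*ℓ^2/(r s₀)^2 = ((r s₀)-2*M)*ℓ^2/(r s₀)^3 := by
        rw [div_eq_div_iff (by positivity) (by positivity)]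
        field_simp
      calc E^2*(r s₀)^3 = ((prs s₀)^2 + (1-2*M/(r s₀))*ℓ^2/(r s₀)^2)*(r s₀)^3 := by
            rw [← hsh]
        _ = (prs s₀)^2*(r s₀)^3 + (((r s₀)-2*M)*ℓ^2/(r s₀)^3)*(r s₀)^3 := by
            rw [h1]; ring
        _ = (prs s₀)^2*(r s₀)^3 + ((r s₀)-2*M)*ℓ^2 := by
            rw [div_mul_cancel₀ _ (show ((r s₀):ℝ)^3 ≠ 0 by positivity)]
    have hwR : |(r s₀) - 3*M| ≤ (r s₀) := by
      rw [abs_le]; constructor <;> [linarith; linarith]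
    have hppos : 0 < |(prs s₀)| := abs_pos.mpr hp0
    have hwpos : 0 < |(r s₀) - 3*M| := abs_pos.mpr (sub_ne_zero.mpr hr3)
    have k1 := key1 hM hR2M hppos hwpos hwR hE hl hpE hsh'
    have k2 := key2 hM hR2M hppos hwpos hwR hE hl hpE rfl hsh'
    simp only [sq_abs] at k1 k2
    have hSnn : (0:ℝ) ≤ (prs s₀)^2/(r s₀)^2 + ((r s₀) - 3*M)^2*ℓ^2/(3*M*(r s₀)^5) := by positivity
    have b1 : ((|(prs s₀)| * |(r s₀) - 3*M| / (3*(r s₀)*E)) ^ ((3:ℝ)/4)) * (E*(|(prs s₀)|/(r s₀)^2)) ≤ (prs s₀)^2/(r s₀)^2 + ((r s₀) - 3*M)^2*ℓ^2/(3*M*(r s₀)^5) := by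
      have := rpow34 hpw.le hSnn (by positivity) k1
      linarith [this]
    have b2 : ((|(prs s₀)| * |(r s₀) - 3*M| / (3*(r s₀)*E)) ^ ((3:ℝ)/4)) * ((E/(8*M))*(|(r s₀) - 3*M| * ℓ^2/((r s₀)^4*E))) ≤ (prs s₀)^2/(r s₀)^2 + ((r s₀) - 3*M)^2*ℓ^2/(3*M*(r s₀)^5) := by
      have := rpow34 hpw.le hSnn (by positivity) k2
      linarith [this]
    have habs1 : |1 - 3*M/(r s₀)| = |(r s₀) - 3*M|/(r s₀) := by
      rw [show (1:ℝ) - 3*M/(r s₀) = ((r s₀)-3*M)/(r s₀) from by field_simp, abs_div,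
        abs_of_pos hR0]
    rw [habs1]
    have hT2eq : |(r s₀) - 3*M|/(r s₀)*ℓ^2/((r s₀)^3*E) = |(r s₀) - 3*M| * ℓ^2/((r s₀)^4*E) := by
      rw [div_eq_div_iff (by positivity) (by positivity)]
      field_simp
    rw [hT2eq]
    have hrwA : (M/E) * ((prs s₀)^2/(r s₀)^2 + ((r s₀) - 3*M)^2*ℓ^2/(3*M*(r s₀)^5)) / 4 * ((|(prs s₀)| * |(r s₀) - 3*M| / (3*(r s₀)*E)) ^ ((3:ℝ)/4))⁻¹ = ((M/(4*E)) * ((prs s₀)^2/(r s₀)^2 + ((r s₀) - 3*M)^2*ℓ^2/(3*M*(r s₀)^5)))/((|(prs s₀)| * |(r s₀) - 3*M| / (3*(r s₀)*E)) ^ ((3:ℝ)/4)) := by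
      rw [div_eq_mul_inv ((M/(4*E)) * ((prs s₀)^2/(r s₀)^2 + ((r s₀) - 3*M)^2*ℓ^2/(3*M*(r s₀)^5))) ((|(prs s₀)| * |(r s₀) - 3*M| / (3*(r s₀)*E)) ^ ((3:ℝ)/4))]
      ring
    have c1 : (M/4)*(|(prs s₀)|/(r s₀)^2)*((|(prs s₀)| * |(r s₀) - 3*M| / (3*(r s₀)*E)) ^ ((3:ℝ)/4)) ≤ (M/(4*E)) * ((prs s₀)^2/(r s₀)^2 + ((r s₀) - 3*M)^2*ℓ^2/(3*M*(r s₀)^5)) := by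
      have hmul := mul_le_mul_of_nonneg_left b1 (show (0:ℝ) ≤ M/(4*E) by positivity)
      have heq : (M/(4*E))*(((|(prs s₀)| * |(r s₀) - 3*M| / (3*(r s₀)*E)) ^ ((3:ℝ)/4))*(E*(|(prs s₀)|/(r s₀)^2))) = (M/4)*(|(prs s₀)|/(r s₀)^2)*((|(prs s₀)| * |(r s₀) - 3*M| / (3*(r s₀)*E)) ^ ((3:ℝ)/4)) := by
        field_simp
      linarith [heq ▸ hmul]
    have c2 : (1/32)*(|(r s₀) - 3*M| * ℓ^2/((r s₀)^4*E))*((|(prs s₀)| * |(r s₀) - 3*M| / (3*(r s₀)*E)) ^ ((3:ℝ)/4)) ≤ (M/(4*E)) * ((prs s₀)^2/(r s₀)^2 + ((r s₀) - 3*M)^2*ℓ^2/(3*M*(r s₀)^5)) := by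
      have hmul := mul_le_mul_of_nonneg_left b2 (show (0:ℝ) ≤ M/(4*E) by positivity)
      have heq : (M/(4*E))*(((|(prs s₀)| * |(r s₀) - 3*M| / (3*(r s₀)*E)) ^ ((3:ℝ)/4))*((E/(8*M))*(|(r s₀) - 3*M| * ℓ^2/((r s₀)^4*E)))) = (1/32)*(|(r s₀) - 3*M| * ℓ^2/((r s₀)^4*E))*((|(prs s₀)| * |(r s₀) - 3*M| / (3*(r s₀)*E)) ^ ((3:ℝ)/4)) := by
        field_simp
        ring
      linarith [heq ▸ hmul]
    have hfin : min (M/8) (1/64) * (|(prs s₀)|/(r s₀)^2 + |(r s₀) - 3*M| * ℓ^2/((r s₀)^4*E)) ≤ (M/E) * ((prs s₀)^2/(r s₀)^2 + ((r s₀) - 3*M)^2*ℓ^2/(3*M*(r s₀)^5)) / 4 * ((|(prs s₀)| * |(r s₀) - 3*M| / (3*(r s₀)*E)) ^ ((3:ℝ)/4))⁻¹ := by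
      rw [hrwA, le_div_iff₀ hy]
      have m1 : min (M/8) (1/64) ≤ M/8 := min_le_left _ _
      have m2 : min (M/8) (1/64) ≤ (1:ℝ)/64 := min_le_right _ _
      have hT1y : (0:ℝ) ≤ (|(prs s₀)|/(r s₀)^2)*((|(prs s₀)| * |(r s₀) - 3*M| / (3*(r s₀)*E)) ^ ((3:ℝ)/4)) := mul_nonneg (by positivity) hy.le
      have hT2y : (0:ℝ) ≤ (|(r s₀) - 3*M| * ℓ^2/((r s₀)^4*E))*((|(prs s₀)| * |(r s₀) - 3*M| / (3*(r s₀)*E)) ^ ((3:ℝ)/4)) := mul_nonneg (by positivity) hy.le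
      have e2 : min (M/8) (1/64)*((|(prs s₀)|/(r s₀)^2)*((|(prs s₀)| * |(r s₀) - 3*M| / (3*(r s₀)*E)) ^ ((3:ℝ)/4))) ≤ (M/8)*((|(prs s₀)|/(r s₀)^2)*((|(prs s₀)| * |(r s₀) - 3*M| / (3*(r s₀)*E)) ^ ((3:ℝ)/4))) :=
        mul_le_mul_of_nonneg_right m1 hT1y
      have e3 : min (M/8) (1/64)*((|(r s₀) - 3*M| * ℓ^2/((r s₀)^4*E))*((|(prs s₀)| * |(r s₀) - 3*M| / (3*(r s₀)*E)) ^ ((3:ℝ)/4))) ≤ (1/64)*((|(r s₀) - 3*M| * ℓ^2/((r s₀)^4*E))*((|(prs s₀)| * |(r s₀) - 3*M| / (3*(r s₀)*E)) ^ ((3:ℝ)/4))) :=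
        mul_le_mul_of_nonneg_right m2 hT2y
      nlinarith [c1, c2, e2, e3]
    have hT1nn : (0:ℝ) ≤ |(prs s₀)|/(r s₀)^2 := by positivity
    have hT2nn : (0:ℝ) ≤ |(r s₀) - 3*M| * ℓ^2/((r s₀)^4*E) := by positivity
    linarith [hfin]
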